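/- Let κ be an infinite cardinal, let λ be the smallest cardinal for which κ^λ > κ, let T = (⋃_{α<λ} κ^α) ∪ κ^λ be the set of all functions from ordinals α ≤ λ into κ, and order T by: f ≤ g iff g extends f, or f(i) < g(i) where i is the smallest ordinal at which f and g differ. Then ≤ is a linear order on T, and for any f₁, f₂ ∈ κ^λ with f₁ < f₂, the set {d ∈ D : f₁ < d < f₂} has cardinality κ, where D = ⋃_{α<λ} κ^α. -/

import Mathlib

universe u

/-- An element of the tree `T = (⋃_{α<λ} κ^α) ∪ κ^λ`: a function from an ordinal
`dom ≤ λ` into (the ordinals below) `κ`, encoded as a total function on ordinals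
that is zero outside its domain. -/
structure TreeFn (κ lam : Cardinal.{u}) : Type (u + 1) where
  dom : Ordinal.{u}
  dom_le : dom ≤ lam.ord
  toFun : Ordinal.{u} → Ordinal.{u}
  lt_of_mem : ∀ i < dom, toFun i < κ.ord
  eq_zero_of_le : ∀ i, dom ≤ i → toFun i = 0

namespace TreeFn

/-- `g` extends `f`: the domain of `f` is contained in the domain of `g` and
`g` agrees with `f` on the domain of `f`. -/
def Extends {κ lam : Cardinal.{u}} (g f : TreeFn κ lam) : Prop :=
  f.dom ≤ g.dom ∧ ∀ i < f.dom, f.toFun i = g.toFun i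

/-- The ordering on `T`: `f ≤ g` iff `g` extends `f`, or `f i < g i` where `i` is
the smallest ordinal at which `f` and `g` differ. -/
def le {κ lam : Cardinal.{u}} (f g : TreeFn κ lam) : Prop :=
  Extends g f ∨ ∃ i, (∀ j < i, f.toFun j = g.toFun j) ∧ f.toFun i < g.toFun i

/-- The corresponding strict ordering. -/
def lt {κ lam : Cardinal.{u}} (f g : TreeFn κ lam) : Prop :=
  le f g ∧ f ≠ g

end TreeFn

namespace TreeFn

variable {κ lam : Cardinal.{u}}

theorem ext' {f g : TreeFn κ lam} (h1 : f.dom = g.dom) (h2 : f.toFun = g.toFun) : f = g := by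
  cases f; cases g; simp_all

theorem exists_least_diff {f g : TreeFn κ lam} (h : f.toFun ≠ g.toFun) :
    ∃ i, (∀ j < i, f.toFun j = g.toFun j) ∧ f.toFun i ≠ g.toFun i := by
  obtain ⟨i, hi, hmin⟩ := wellFounded_lt.has_min {i | f.toFun i ≠ g.toFun i}
    (Function.ne_iff.mp h)
  exact ⟨i, fun j hj => not_not.mp (fun hne => hmin j hne hj), hi⟩

theorem le_iff {f g : TreeFn κ lam} : le f g ↔
    (f.toFun = g.toFun ∧ f.dom ≤ g.dom) ∨
    ∃ i, (∀ j < i, f.toFun j = g.toFun j) ∧ f.toFun i < g.toFun i := by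
  constructor
  · rintro (⟨hdom, hag⟩ | hw)
    · by_cases heq : f.toFun = g.toFun
      · exact Or.inl ⟨heq, hdom⟩
      · obtain ⟨i, hbelow, hne⟩ := exists_least_diff heq
        refine Or.inr ⟨i, hbelow, ?_⟩
        have hfd : f.dom ≤ i := by
          by_contra hlt
          exact hne (hag i (lt_of_not_ge hlt))
        rw [f.eq_zero_of_le i hfd]
        rw [f.eq_zero_of_le i hfd] at hne
        exact pos_iff_ne_zero.mpr (Ne.symm hne)
    · exact Or.inr hw
  · rintro (⟨heq, hdom⟩ | hw)
    · exact Or.inl ⟨hdom, fun i _ => congrFun heq i⟩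
    · exact Or.inr hw

theorem le_refl' (f : TreeFn κ lam) : le f f :=
  Or.inl ⟨le_refl _, fun _ _ => rfl⟩

theorem antisymm' {f g : TreeFn κ lam} (h1 : le f g) (h2 : le g f) : f = g := by
  rcases le_iff.mp h1 with ⟨he, hd⟩ | ⟨i, hb, hi⟩
  · rcases le_iff.mp h2 with ⟨he', hd'⟩ | ⟨i', hb', hi'⟩
    · exact ext' (le_antisymm hd hd') he
    · exact absurd hi' (by rw [he]; exact lt_irrefl _)
  · rcases le_iff.mp h2 with ⟨he', hd'⟩ | ⟨i', hb', hi'⟩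
    · exact absurd hi (by rw [he']; exact lt_irrefl _)
    · rcases lt_trichotomy i i' with h | h | h
      · exact absurd hi (by rw [← hb' i h]; exact lt_irrefl _)
      · subst h; exact absurd (hi.trans hi') (lt_irrefl _)
      · exact absurd hi' (by rw [← hb i' h]; exact lt_irrefl _)

theorem trans' {f g h : TreeFn κ lam} (h1 : le f g) (h2 : le g h) : le f h := by
  rw [le_iff] at h1 h2 ⊢
  rcases h1 with ⟨he1, hd1⟩ | ⟨i, hb, hi⟩
  · rcases h2 with ⟨he2, hd2⟩ | ⟨i', hb', hi'⟩
    · exact Or.inl ⟨he1.trans he2, hd1.trans hd2⟩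
    · exact Or.inr ⟨i', fun j hj => by rw [he1]; exact hb' j hj, by rw [he1]; exact hi'⟩
  · rcases h2 with ⟨he2, hd2⟩ | ⟨i', hb', hi'⟩
    · exact Or.inr ⟨i, fun j hj => by rw [← he2]; exact hb j hj, by rw [← he2]; exact hi⟩
    · rcases lt_trichotomy i i' with hlt | heq | hgt
      · exact Or.inr ⟨i, fun j hj => (hb j hj).trans (hb' j (hj.trans hlt)),
          by rw [← hb' i hlt]; exact hi⟩
      · subst heq; exact Or.inr ⟨i, fun j hj => (hb j hj).trans (hb' j hj), hi.trans hi'⟩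
      · exact Or.inr ⟨i', fun j hj => (hb j (hj.trans hgt)).trans (hb' j hj),
          by rw [hb i' hgt]; exact hi'⟩

theorem total' (f g : TreeFn κ lam) : le f g ∨ le g f := by
  by_cases heq : f.toFun = g.toFun
  · rcases le_total f.dom g.dom with h | h
    · exact Or.inl (le_iff.mpr (Or.inl ⟨heq, h⟩))
    · exact Or.inr (le_iff.mpr (Or.inl ⟨heq.symm, h⟩))
  · obtain ⟨i, hb, hne⟩ := exists_least_diff heq
    rcases hne.lt_or_gt with h | h
    · exact Or.inl (Or.inr ⟨i, hb, h⟩)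
    · exact Or.inr (Or.inr ⟨i, fun j hj => (hb j hj).symm, h⟩)

end TreeFn

open Cardinal in
theorem between_card (κ lam : Cardinal.{u}) (hκ : Cardinal.aleph0 ≤ κ)
    (hlam : κ < κ ^ lam) (hleast : ∀ μ : Cardinal.{u}, μ < lam → κ ^ μ ≤ κ)
    (f₁ f₂ : TreeFn κ lam) (h1 : f₁.dom = lam.ord) (h2 : f₂.dom = lam.ord)
    (hlt : TreeFn.lt f₁ f₂) :
    Cardinal.mk {d : TreeFn κ lam // d.dom < lam.ord ∧
        TreeFn.lt f₁ d ∧ TreeFn.lt d f₂} = Cardinal.lift.{u + 1} κ := by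
  -- lam is infinite
  have hlam0 : Cardinal.aleph0 ≤ lam := by
    by_contra hfin
    obtain ⟨n, rfl⟩ := Cardinal.lt_aleph0.mp (lt_of_not_ge hfin)
    exact absurd (Cardinal.power_nat_le hκ) (not_le.mpr hlam)
  have hord : Order.IsSuccLimit (lam.ord) := Cardinal.isSuccLimit_ord hlam0
  have hκord : Order.IsSuccLimit (κ.ord) := Cardinal.isSuccLimit_ord hκ
  -- the first difference point
  have hne12 : f₁.toFun ≠ f₂.toFun := by
    intro h
    exact hlt.2 (TreeFn.ext' (h1.trans h2.symm) h)
  obtain ⟨i₀, hb, hi₀⟩ : ∃ i, (∀ j < i, f₁.toFun j = f₂.toFun j) ∧ f₁.toFun i < f₂.toFun i := by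
    rcases TreeFn.le_iff.mp hlt.1 with ⟨he, _⟩ | hw
    · exact absurd he hne12
    · exact hw
  have hi₀lt : i₀ < lam.ord := by
    by_contra hge
    have : f₂.toFun i₀ = 0 := f₂.eq_zero_of_le i₀ (h2.le.trans (le_of_not_gt hge))
    rw [this] at hi₀
    exact absurd hi₀ (not_lt_of_ge zero_le)
  set α : Ordinal.{u} := Order.succ i₀ with hαdef
  have hi0α : i₀ < α := Order.lt_succ i₀
  have hα : α < lam.ord := hord.succ_lt hi₀lt
  have hsα : Order.succ α < lam.ord := hord.succ_lt hα
  have hf₁α : f₁.toFun α < κ.ord := f₁.lt_of_mem α (h1 ▸ hα)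
  -- sum bound inside κ.ord
  have hadd : ∀ a b : Ordinal.{u}, a < κ.ord → b < κ.ord → a + b < κ.ord := by
    intro a b ha hb
    rw [Cardinal.lt_ord] at ha hb ⊢
    rw [Ordinal.card_add]
    exact Cardinal.add_lt_of_lt hκ ha hb
  have hone : (1 : Ordinal.{u}) < κ.ord := by
    rw [Cardinal.lt_ord]
    simpa using Cardinal.one_lt_aleph0.trans_le hκ
  have hzero : (0 : Ordinal.{u}) < κ.ord := hone.trans' (by simp)
  -- the family of intermediate elements
  set S := {d : TreeFn κ lam // d.dom < lam.ord ∧ TreeFn.lt f₁ d ∧ TreeFn.lt d f₂} with hSdef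
  let D : {v : Ordinal.{u} // v < κ.ord} → TreeFn κ lam := fun v =>
    { dom := Order.succ α
      dom_le := hsα.le
      toFun := fun j => if j < α then f₁.toFun j else
        if j = α then f₁.toFun α + 1 + v.1 else 0
      lt_of_mem := by
        intro j hj
        show (if j < α then f₁.toFun j else
          if j = α then f₁.toFun α + 1 + v.1 else 0) < κ.ord
        rcases lt_or_eq_of_le (Order.lt_succ_iff.mp hj) with hjα | hjα
        · rw [if_pos hjα]
          exact f₁.lt_of_mem j (h1 ▸ (hjα.trans hα))
        · rw [if_neg (by simp [hjα]), if_pos hjα]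
          exact hadd _ _ (hadd _ _ hf₁α hone) v.2
      eq_zero_of_le := by
        intro j hj
        show (if j < α then f₁.toFun j else
          if j = α then f₁.toFun α + 1 + v.1 else 0) = 0
        have h1' : ¬ j < α := not_lt.mpr ((Order.le_succ α).trans hj)
        have h2' : j ≠ α := by
          intro h; rw [h] at hj; exact absurd (Order.lt_succ α) (not_lt.mpr hj)
        rw [if_neg h1', if_neg h2'] }
  have hDα : ∀ v, (D v).toFun α = f₁.toFun α + 1 + v.1 := by
    intro v
    show (if α < α then f₁.toFun α else
      if α = α then f₁.toFun α + 1 + v.1 else 0) = f₁.toFun α + 1 + v.1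
    rw [if_neg (lt_irrefl α), if_pos rfl]
  have hDlt : ∀ v (j : Ordinal.{u}), j < α → (D v).toFun j = f₁.toFun j := by
    intro v j hj
    show (if j < α then f₁.toFun j else
      if j = α then f₁.toFun α + 1 + v.1 else 0) = f₁.toFun j
    rw [if_pos hj]
  have hmem : ∀ v, (D v).dom < lam.ord ∧ TreeFn.lt f₁ (D v) ∧ TreeFn.lt (D v) f₂ := by
    intro v
    have hdomne : (D v).dom ≠ f₁.dom := by
      show Order.succ α ≠ f₁.dom
      rw [h1]; exact ne_of_lt hsα
    refine ⟨hsα, ⟨Or.inr ⟨α, fun j hj => (hDlt v j hj).symm, ?_⟩, ?_⟩,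
      ⟨Or.inr ⟨i₀, fun j hj => ?_, ?_⟩, ?_⟩⟩
    · rw [hDα]
      calc f₁.toFun α < f₁.toFun α + 1 := by
            rw [Ordinal.add_one_eq_succ]; exact Order.lt_succ _
        _ ≤ f₁.toFun α + 1 + v.1 := le_self_add
    · intro h; exact hdomne (congrArg TreeFn.dom h).symm
    · rw [hDlt v j (hj.trans hi0α)]; exact hb j hj
    · rw [hDlt v i₀ hi0α]; exact hi₀
    · intro h
      apply hdomne
      rw [congrArg TreeFn.dom h, h2, h1]
  let Φ : {v : Ordinal.{u} // v < κ.ord} → S := fun v => ⟨D v, hmem v⟩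
  have hΦinj : Function.Injective Φ := by
    intro v w h
    have hval : (D v).toFun α = (D w).toFun α := by
      rw [show D v = D w from congrArg Subtype.val h]
    rw [hDα, hDα] at hval
    exact Subtype.ext (add_left_cancel hval)
  have hlow : Cardinal.lift.{u+1} κ ≤ Cardinal.mk S := by
    have : Cardinal.mk {v : Ordinal.{u} // v < κ.ord} = Cardinal.lift.{u+1} κ := by
      have := Ordinal.mk_Iio_ordinal κ.ord
      rw [Cardinal.card_ord] at this
      exact this
    rw [← this]
    exact Cardinal.mk_le_of_injective hΦinj
  -- upper bound
  have hlamκ : lam ≤ κ := by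
    by_contra hgt
    have h2κ : κ < κ ^ κ := by
      refine (Cardinal.cantor κ).trans_le (Cardinal.power_le_power_right ?_)
      exact_mod_cast (Cardinal.nat_lt_aleph0 2).le.trans hκ
    exact absurd (hleast κ (lt_of_not_ge hgt)) (not_le.mpr h2κ)
  have hup : Cardinal.mk S ≤ Cardinal.lift.{u+1} κ := by
    let Ψ : S → Σ β : ↥(Set.Iio lam.ord), (↥(Set.Iio (β : Ordinal.{u})) → ↥(Set.Iio κ.ord)) :=
      fun d => ⟨⟨d.1.dom, d.2.1⟩, fun j => ⟨d.1.toFun j.1, d.1.lt_of_mem j.1 j.2⟩⟩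
    have hinj : Function.Injective Ψ := by
      rintro ⟨⟨dom1, hle1, t1, hm1, hz1⟩, hd1⟩ ⟨⟨dom2, hle2, t2, hm2, hz2⟩, hd2⟩ h
      obtain ⟨hfst, hsnd⟩ := Sigma.ext_iff.mp h
      have hdom : dom1 = dom2 := congrArg Subtype.val hfst
      subst hdom
      have hfun' := eq_of_heq hsnd
      apply Subtype.ext
      refine TreeFn.ext' rfl ?_
      funext j
      show t1 j = t2 j
      rcases lt_or_ge j dom1 with hj | hj
      · exact congrArg Subtype.val (congrFun hfun' ⟨j, hj⟩)
      · rw [hz1 j hj, hz2 j hj]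
    have hfiber : ∀ β : ↥(Set.Iio lam.ord),
        Cardinal.mk (↥(Set.Iio (β : Ordinal.{u})) → ↥(Set.Iio κ.ord)) ≤
          Cardinal.lift.{u+1} κ := by
      intro β
      rw [← Cardinal.power_def, Ordinal.mk_Iio_ordinal, Ordinal.mk_Iio_ordinal,
        Cardinal.card_ord, ← Cardinal.lift_power]
      exact Cardinal.lift_le.mpr (hleast _ (Cardinal.lt_ord.mp β.2))
    calc Cardinal.mk S
        ≤ Cardinal.mk (Σ β : ↥(Set.Iio lam.ord),
            (↥(Set.Iio (β : Ordinal.{u})) → ↥(Set.Iio κ.ord))) :=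
          Cardinal.mk_le_of_injective hinj
      _ = Cardinal.sum (fun β : ↥(Set.Iio lam.ord) =>
            Cardinal.mk (↥(Set.Iio (β : Ordinal.{u})) → ↥(Set.Iio κ.ord))) :=
          Cardinal.mk_sigma _
      _ ≤ Cardinal.sum (fun _ : ↥(Set.Iio lam.ord) => Cardinal.lift.{u+1} κ) :=
          Cardinal.sum_le_sum _ _ hfiber
      _ = Cardinal.mk ↥(Set.Iio lam.ord) * Cardinal.lift.{u+1} κ :=
          Cardinal.sum_const' _ _
      _ = Cardinal.lift.{u+1} lam * Cardinal.lift.{u+1} κ := by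
          rw [Ordinal.mk_Iio_ordinal, Cardinal.card_ord]
      _ = Cardinal.lift.{u+1} (lam * κ) := (Cardinal.lift_mul _ _).symm
      _ ≤ Cardinal.lift.{u+1} κ := by
          apply Cardinal.lift_le.mpr
          calc lam * κ ≤ κ * κ := mul_le_mul_left hlamκ κ
            _ = κ := Cardinal.mul_eq_self hκ
  exact le_antisymm hup hlow



/-- Let κ be an infinite cardinal and λ the smallest cardinal with
κ^λ > κ. Order the tree T of functions from ordinals α ≤ λ into κ by: f ≤ g iff g
extends f, or f(i) < g(i) at the smallest ordinal i where f and g differ. Then ≤ is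
a linear order on T, and for any f₁ < f₂ in κ^λ, the set of elements of
D = ⋃_{α<λ} κ^α strictly between f₁ and f₂ has cardinality κ. -/
theorem treeFn_linearOrder_and_between (κ lam : Cardinal.{u})
    (hκ : Cardinal.aleph0 ≤ κ) (hlam : κ < κ ^ lam)
    (hleast : ∀ μ : Cardinal.{u}, μ < lam → κ ^ μ ≤ κ) :
    ((∀ f : TreeFn κ lam, TreeFn.le f f) ∧
     (∀ f g : TreeFn κ lam, TreeFn.le f g → TreeFn.le g f → f = g) ∧
     (∀ f g h : TreeFn κ lam, TreeFn.le f g → TreeFn.le g h → TreeFn.le f h) ∧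
     (∀ f g : TreeFn κ lam, TreeFn.le f g ∨ TreeFn.le g f)) ∧
    (∀ f₁ f₂ : TreeFn κ lam, f₁.dom = lam.ord → f₂.dom = lam.ord →
      TreeFn.lt f₁ f₂ →
      Cardinal.mk {d : TreeFn κ lam // d.dom < lam.ord ∧
        TreeFn.lt f₁ d ∧ TreeFn.lt d f₂} = Cardinal.lift.{u + 1} κ) := by
  exact ⟨⟨TreeFn.le_refl', fun f g h1 h2 => TreeFn.antisymm' h1 h2,
    fun f g h h1 h2 => TreeFn.trans' h1 h2, TreeFn.total'⟩,
    fun f₁ f₂ h1 h2 hlt => between_card κ lam hκ hlam hleast f₁ f₂ h1 h2 hlt⟩
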